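/- arXiv:1311.6847 — 2 statements merged into one kernel-verified Lean document; each statement's English description precedes it below -/
import Mathlib

section
/- The ring of invariants of the formal power series ring ℂ[[u,v]] under the action of the group μ_k of k-th roots of unity, where ζ acts by u ↦ ζu and v ↦ ζ⁻¹v, is isomorphic to ℂ[[x,y,s]]/(xy − s^k) via x = u^k, y = v^k, s = uv. -/
namespace Stmt0Aux
open MvPowerSeries Finsupp

noncomputable section
open scoped Classical

def mk2 (m n : ℕ) : Fin 2 →₀ ℕ := Finsupp.equivFunOnFinite.symm ![m, n]
def mk3 (a b c : ℕ) : Fin 3 →₀ ℕ := Finsupp.equivFunOnFinite.symm ![a, b, c]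

@[simp] lemma mk2_apply0 (m n : ℕ) : mk2 m n 0 = m := rfl
@[simp] lemma mk2_apply1 (m n : ℕ) : mk2 m n 1 = n := rfl
@[simp] lemma mk3_apply0 (a b c : ℕ) : mk3 a b c 0 = a := rfl
@[simp] lemma mk3_apply1 (a b c : ℕ) : mk3 a b c 1 = b := rfl
@[simp] lemma mk3_apply2 (a b c : ℕ) : mk3 a b c 2 = c := rfl

lemma eq_mk3 (d : Fin 3 →₀ ℕ) : d = mk3 (d 0) (d 1) (d 2) := by
  ext i; fin_cases i <;> rfl

lemma eq_mk2 (e : Fin 2 →₀ ℕ) : e = mk2 (e 0) (e 1) := by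
  ext i; fin_cases i <;> rfl

lemma mk2_inj {m n m' n' : ℕ} (h : mk2 m n = mk2 m' n') : m = m' ∧ n = n' :=
  ⟨by rw [← mk2_apply0 m n, h, mk2_apply0], by rw [← mk2_apply1 m n, h, mk2_apply1]⟩

lemma mk3_inj {a b c a' b' c' : ℕ} (h : mk3 a b c = mk3 a' b' c') : a = a' ∧ b = b' ∧ c = c' :=
  ⟨by rw [← mk3_apply0 a b c, h, mk3_apply0],
   by rw [← mk3_apply1 a b c, h, mk3_apply1],
   by rw [← mk3_apply2 a b c, h, mk3_apply2]⟩

variable (k : ℕ)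

def E (d : Fin 3 →₀ ℕ) : Fin 2 →₀ ℕ := mk2 (k * d 0 + d 2) (k * d 1 + d 2)

@[simp] lemma E_apply0 (d : Fin 3 →₀ ℕ) : E k d 0 = k * d 0 + d 2 := rfl
@[simp] lemma E_apply1 (d : Fin 3 →₀ ℕ) : E k d 1 = k * d 1 + d 2 := rfl

lemma E_add (d d' : Fin 3 →₀ ℕ) : E k (d + d') = E k d + E k d' := by
  ext i; fin_cases i <;> simp [E, mul_add] <;> ring

lemma E_zero : E k 0 = 0 := by ext i; fin_cases i <;> simp [E]

def fiber (e : Fin 2 →₀ ℕ) : Finset (Fin 3 →₀ ℕ) :=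
  (Finset.Iic (mk3 (e 0) (e 1) (e 0))).filter (fun d => E k d = e)

variable {k} (hk : 1 ≤ k)

include hk in
lemma mem_fiber {e : Fin 2 →₀ ℕ} {d : Fin 3 →₀ ℕ} :
    d ∈ fiber k e ↔ E k d = e := by
  constructor
  · exact fun h => (Finset.mem_filter.mp h).2
  · intro h
    refine Finset.mem_filter.mpr ⟨Finset.mem_Iic.mpr ?_, h⟩
    have h0 : k * d 0 + d 2 = e 0 := by rw [← h]; rfl
    have h1 : k * d 1 + d 2 = e 1 := by rw [← h]; rfl
    rw [Finsupp.le_def]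
    intro i
    fin_cases i <;> simp <;> nlinarith [hk]

include hk in
lemma E_eq_zero {d : Fin 3 →₀ ℕ} (h : E k d = 0) : d = 0 := by
  have h0 : k * d 0 + d 2 = 0 := by rw [← E_apply0 k d, h]; rfl
  have h1 : k * d 1 + d 2 = 0 := by rw [← E_apply1 k d, h]; rfl
  ext i; fin_cases i <;> simp <;> nlinarith [hk]

variable (k) in
def phiFun (f : MvPowerSeries (Fin 3) ℂ) : MvPowerSeries (Fin 2) ℂ :=
  fun e => ∑ d ∈ fiber k e, f d

lemma coeff_phiFun (f : MvPowerSeries (Fin 3) ℂ) (e : Fin 2 →₀ ℕ) :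
    coeff e (phiFun k f) = ∑ d ∈ fiber k e, coeff d f := rfl

include hk in
lemma phiFun_monomial (d : Fin 3 →₀ ℕ) (a : ℂ) :
    phiFun k (monomial d a) = monomial (E k d) a := by
  apply MvPowerSeries.ext; intro e
  rw [coeff_phiFun, coeff_monomial]
  have : ∀ d' ∈ fiber k e, coeff d' (monomial d a) = if d' = d then a else 0 := by
    intro d' _; rw [coeff_monomial]
  rw [Finset.sum_congr rfl this, Finset.sum_ite_eq' (fiber k e) d (fun _ => a)]
  by_cases h : E k d = e
  · rw [if_pos ((mem_fiber hk).mpr h), if_pos h.symm]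
  · rw [if_neg (fun hc => h ((mem_fiber hk).mp hc)), if_neg (fun hc => h hc.symm)]

include hk in
lemma phiFun_mul (f g : MvPowerSeries (Fin 3) ℂ) :
    phiFun k (f * g) = phiFun k f * phiFun k g := by
  apply MvPowerSeries.ext; intro e
  rw [coeff_phiFun, MvPowerSeries.coeff_mul]
  have hrhs : ∀ p ∈ Finset.HasAntidiagonal.antidiagonal e, coeff p.1 (phiFun k f) * coeff p.2 (phiFun k g)
      = ∑ q ∈ fiber k p.1 ×ˢ fiber k p.2, coeff q.1 f * coeff q.2 g := by
    intro p _
    rw [coeff_phiFun, coeff_phiFun, Finset.sum_mul_sum, ← Finset.sum_product']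
  rw [Finset.sum_congr rfl hrhs]
  have hlhs : ∀ d ∈ fiber k e, coeff d (f * g)
      = ∑ q ∈ Finset.HasAntidiagonal.antidiagonal d, coeff q.1 f * coeff q.2 g := by
    intro d _; rw [MvPowerSeries.coeff_mul]
  rw [Finset.sum_congr rfl hlhs]
  rw [← Finset.sum_biUnion, ← Finset.sum_biUnion]
  · apply Finset.sum_congr _ (fun _ _ => rfl)
    apply Finset.ext
    intro q
    simp only [Finset.mem_biUnion, Finset.HasAntidiagonal.mem_antidiagonal, Finset.mem_product, mem_fiber hk]
    constructor
    · rintro ⟨d, hd, hq⟩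
      exact ⟨(E k q.1, E k q.2), by rw [← E_add, hq, hd], rfl, rfl⟩
    · rintro ⟨p, hp, h1, h2⟩
      exact ⟨q.1 + q.2, by rw [E_add, h1, h2, hp], rfl⟩
  · intro p _ p' _ hpp'
    simp only [Function.onFun]
    apply Finset.disjoint_left.mpr
    intro q hq hq'
    simp only [Finset.mem_product, mem_fiber hk] at hq hq'
    exact hpp' (by rw [Prod.ext_iff, ← hq.1, ← hq.2, ← hq'.1, ← hq'.2]; exact ⟨rfl, rfl⟩)
  · intro d hd d' hd' hdd'
    simp only [Function.onFun]
    apply Finset.disjoint_left.mpr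
    intro q hq hq'
    rw [Finset.HasAntidiagonal.mem_antidiagonal] at hq hq'
    exact hdd' (by rw [← hq, ← hq'])

lemma phiFun_add (f g : MvPowerSeries (Fin 3) ℂ) :
    phiFun k (f + g) = phiFun k f + phiFun k g := by
  apply MvPowerSeries.ext; intro e
  rw [map_add, coeff_phiFun, coeff_phiFun, coeff_phiFun, ← Finset.sum_add_distrib]
  exact Finset.sum_congr rfl (fun d _ => by rw [map_add])

variable (k) in
def phi (hk : 1 ≤ k) : MvPowerSeries (Fin 3) ℂ →+* MvPowerSeries (Fin 2) ℂ where
  toFun := phiFun k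
  map_one' := by
    rw [show (1 : MvPowerSeries (Fin 3) ℂ) = monomial 0 1 from rfl,
      phiFun_monomial hk, E_zero]; rfl
  map_mul' := phiFun_mul hk
  map_zero' := by
    apply MvPowerSeries.ext; intro e
    rw [coeff_phiFun]; simp
  map_add' := phiFun_add

lemma phi_monomial (d : Fin 3 →₀ ℕ) (a : ℂ) :
    phi k hk (monomial d a) = monomial (E k d) a := phiFun_monomial hk d a

-- images of the variables
lemma single_eq_mk3_0 : (Finsupp.single (0 : Fin 3) 1) = mk3 1 0 0 := by
  ext i; fin_cases i <;> simp
lemma single_eq_mk3_1 : (Finsupp.single (1 : Fin 3) 1) = mk3 0 1 0 := by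
  ext i; fin_cases i <;> simp
lemma single_eq_mk3_2 : (Finsupp.single (2 : Fin 3) 1) = mk3 0 0 1 := by
  ext i; fin_cases i <;> simp

lemma phi_X0 : phi k hk (X 0) = (X 0 : MvPowerSeries (Fin 2) ℂ) ^ k := by
  rw [MvPowerSeries.X, single_eq_mk3_0, phi_monomial, MvPowerSeries.X_pow_eq]
  have h : E k (mk3 1 0 0) = Finsupp.single (0 : Fin 2) k := by
    ext i; fin_cases i <;> simp [E]
  rw [h]

lemma phi_X1 : phi k hk (X 1) = (X 1 : MvPowerSeries (Fin 2) ℂ) ^ k := by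
  rw [MvPowerSeries.X, single_eq_mk3_1, phi_monomial, MvPowerSeries.X_pow_eq]
  have h : E k (mk3 0 1 0) = Finsupp.single (1 : Fin 2) k := by
    ext i; fin_cases i <;> simp [E]
  rw [h]

lemma phi_X2 : phi k hk (X 2) = (X 0 : MvPowerSeries (Fin 2) ℂ) * X 1 := by
  rw [MvPowerSeries.X, single_eq_mk3_2, phi_monomial, MvPowerSeries.X, MvPowerSeries.X,
    MvPowerSeries.monomial_mul_monomial, one_mul]
  have h : E k (mk3 0 0 1) = Finsupp.single (0 : Fin 2) 1 + Finsupp.single (1 : Fin 2) 1 := by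
    ext i; fin_cases i <;> simp [E]
  rw [h]

lemma phi_t : phi k hk (X 0 * X 1 - X 2 ^ k) = 0 := by
  rw [map_sub, map_mul, map_pow, phi_X0, phi_X1, phi_X2, mul_pow, sub_self]

variable (k) in
def Dser (f : MvPowerSeries (Fin 3) ℂ) : MvPowerSeries (Fin 3) ℂ :=
  fun d => ∑ j ∈ Finset.range (d 2 / k + 1), f (mk3 (d 0 + 1 + j) (d 1 + 1 + j) (d 2 - k * j))

variable (k) in
def Rser (f : MvPowerSeries (Fin 3) ℂ) : MvPowerSeries (Fin 3) ℂ :=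
  fun d =>
    if d 0 = 0 then ∑ m ∈ Finset.range (d 2 / k + 1), f (mk3 m (d 1 + m) (d 2 - k * m))
    else if d 1 = 0 then ∑ m ∈ Finset.range (d 2 / k + 1), f (mk3 (d 0 + m) m (d 2 - k * m))
    else 0

include hk in
lemma peel_sum (f : MvPowerSeries (Fin 3) ℂ) (a b c : ℕ) :
    ∑ j ∈ Finset.range (c / k + 1), f (mk3 (a + j) (b + j) (c - k * j))
      = f (mk3 a b c) +
        (if k ≤ c then
          ∑ j ∈ Finset.range ((c - k) / k + 1), f (mk3 (a + 1 + j) (b + 1 + j) (c - k - k * j))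
        else 0) := by
  rw [Finset.sum_range_succ']
  simp only [add_zero, Nat.mul_zero, Nat.sub_zero]
  rw [add_comm]
  congr 1
  by_cases hc : k ≤ c
  · rw [if_pos hc]
    have hdiv : c / k = (c - k) / k + 1 := by
      rw [Nat.div_eq_sub_div (by omega) hc]
    rw [hdiv]
    apply Finset.sum_congr rfl
    intro j _
    congr 1
    have h1 : a + (j + 1) = a + 1 + j := by omega
    have h2 : b + (j + 1) = b + 1 + j := by omega
    have h3 : c - k * (j + 1) = c - k - k * j := by
      rw [Nat.mul_succ]; omega
    rw [h1, h2, h3]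
  · rw [if_neg hc]
    have : c / k = 0 := Nat.div_eq_of_lt (by omega)
    rw [this]
    simp

include hk in
lemma division (f : MvPowerSeries (Fin 3) ℂ) :
    f = (X 0 * X 1 - X 2 ^ k) * Dser k f + Rser k f := by
  apply MvPowerSeries.ext; intro d
  have hadd : mk3 1 0 0 + mk3 0 1 0 = mk3 1 1 0 := by ext i; fin_cases i <;> simp
  have hsing2 : Finsupp.single (2 : Fin 3) k = mk3 0 0 k := by ext i; fin_cases i <;> simp
  have hX01 : (X 0 * X 1 : MvPowerSeries (Fin 3) ℂ) = monomial (mk3 1 1 0) 1 := by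
    rw [MvPowerSeries.X, MvPowerSeries.X, MvPowerSeries.monomial_mul_monomial, one_mul,
      single_eq_mk3_0, single_eq_mk3_1, hadd]
  have hX2k : (X 2 ^ k : MvPowerSeries (Fin 3) ℂ) = monomial (mk3 0 0 k) 1 := by
    rw [MvPowerSeries.X_pow_eq, hsing2]
  rw [map_add, sub_mul, map_sub, hX01, hX2k,
    MvPowerSeries.coeff_monomial_mul, MvPowerSeries.coeff_monomial_mul]
  simp only [one_mul]
  set a := d 0 with hha
  set b := d 1 with hhb
  set c := d 2 with hhc
  have hd : d = mk3 a b c := eq_mk3 d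
  have hle1 : mk3 1 1 0 ≤ d ↔ 1 ≤ a ∧ 1 ≤ b := by
    rw [Finsupp.le_def]
    constructor
    · intro h; exact ⟨h 0, h 1⟩
    · intro h i; fin_cases i <;> simp [← hha, ← hhb, h.1, h.2]
  have hle2 : mk3 0 0 k ≤ d ↔ k ≤ c := by
    rw [Finsupp.le_def]
    constructor
    · intro h; exact h 2
    · intro h i; fin_cases i <;> simp [← hhc, h]
  have hsub1 : (d - mk3 1 1 0) 0 = a - 1 ∧ (d - mk3 1 1 0) 1 = b - 1
      ∧ (d - mk3 1 1 0) 2 = c := by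
    refine ⟨?_, ?_, ?_⟩ <;> simp [Finsupp.tsub_apply, ← hha, ← hhb, ← hhc]
  have hsub2 : (d - mk3 0 0 k) 0 = a ∧ (d - mk3 0 0 k) 1 = b ∧ (d - mk3 0 0 k) 2 = c - k := by
    refine ⟨?_, ?_, ?_⟩ <;> simp [Finsupp.tsub_apply, ← hha, ← hhb, ← hhc]
  have hD : ∀ e : Fin 3 →₀ ℕ, coeff e (Dser k f)
      = ∑ j ∈ Finset.range (e 2 / k + 1), f (mk3 (e 0 + 1 + j) (e 1 + 1 + j) (e 2 - k * j)) :=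
    fun e => rfl
  have hR : coeff d (Rser k f) = Rser k f d := rfl
  have hcf : coeff d f = f (mk3 a b c) := by rw [MvPowerSeries.coeff_apply, ← hd]
  by_cases ha : 1 ≤ a <;> by_cases hb : 1 ≤ b
  · -- main case: both positive
    rw [if_pos (hle1.mpr ⟨ha, hb⟩), hD, hD, hsub1.1, hsub1.2.1, hsub1.2.2,
      hsub2.1, hsub2.2.1, hsub2.2.2]
    have hallo : a - 1 + 1 = a := by omega
    have hbllo : b - 1 + 1 = b := by omega
    rw [hallo, hbllo, peel_sum hk f a b c]
    have hRz : Rser k f d = 0 := by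
      simp only [Rser]
      rw [if_neg (by omega), if_neg (by omega)]
    rw [hR, hRz, hcf]
    by_cases hc : k ≤ c
    · rw [if_pos hc, if_pos (hle2.mpr hc)]; ring
    · rw [if_neg hc, if_neg (fun h => hc (hle2.mp h))]; ring
  · -- b = 0
    have hb0 : b = 0 := by omega
    have hRv : Rser k f d
        = ∑ m ∈ Finset.range (c / k + 1), f (mk3 (a + m) (0 + m) (c - k * m)) := by
      simp only [Rser]
      rw [if_neg (by omega), if_pos (by omega)]
      apply Finset.sum_congr rfl; intro m _; rw [Nat.zero_add]
    rw [if_neg (fun h => hb (hle1.mp h).2), hR, hRv, peel_sum hk f a 0 c, hcf, hb0]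
    by_cases hc : k ≤ c
    · rw [if_pos hc, if_pos (hle2.mpr hc), hD, hsub2.1, hsub2.2.1, hsub2.2.2, hb0]; ring
    · rw [if_neg hc, if_neg (fun h => hc (hle2.mp h))]; ring
  · -- a = 0, b ≥ 1
    have ha0 : a = 0 := by omega
    have hRv : Rser k f d
        = ∑ m ∈ Finset.range (c / k + 1), f (mk3 (0 + m) (b + m) (c - k * m)) := by
      simp only [Rser]
      rw [if_pos (by omega)]
      apply Finset.sum_congr rfl; intro m _; rw [Nat.zero_add]
    rw [if_neg (fun h => ha (hle1.mp h).1), hR, hRv, peel_sum hk f 0 b c, hcf, ha0]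
    by_cases hc : k ≤ c
    · rw [if_pos hc, if_pos (hle2.mpr hc), hD, hsub2.1, hsub2.2.1, hsub2.2.2, ha0]; ring
    · rw [if_neg hc, if_neg (fun h => hc (hle2.mp h))]; ring
  · -- a = 0, b = 0
    have ha0 : a = 0 := by omega
    have hRv : Rser k f d
        = ∑ m ∈ Finset.range (c / k + 1), f (mk3 (0 + m) (b + m) (c - k * m)) := by
      simp only [Rser]
      rw [if_pos (by omega)]
      apply Finset.sum_congr rfl; intro m _; rw [Nat.zero_add]
    rw [if_neg (fun h => ha (hle1.mp h).1), hR, hRv, peel_sum hk f 0 b c, hcf, ha0]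
    by_cases hc : k ≤ c
    · rw [if_pos hc, if_pos (hle2.mpr hc), hD, hsub2.1, hsub2.2.1, hsub2.2.2, ha0]; ring
    · rw [if_neg hc, if_neg (fun h => hc (hle2.mp h))]; ring

include hk in
lemma normal_unique {d d' : Fin 3 →₀ ℕ} (hd : d 0 = 0 ∨ d 1 = 0) (hd' : d' 0 = 0 ∨ d' 1 = 0)
    (h : E k d = E k d') : d = d' := by
  have h0 : k * d 0 + d 2 = k * d' 0 + d' 2 := by
    rw [← E_apply0 k d, ← E_apply0 k d', h]
  have h1 : k * d 1 + d 2 = k * d' 1 + d' 2 := by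
    rw [← E_apply1 k d, ← E_apply1 k d', h]
  have hsum : k * (d 0 + d' 1) = k * (d' 0 + d 1) := by ring_nf; omega
  have hsum' : d 0 + d' 1 = d' 0 + d 1 := Nat.eq_of_mul_eq_mul_left (by omega) hsum
  have h00 : d 0 = d' 0 := by
    rcases hd with h2 | h2 <;> rcases hd' with h3 | h3 <;> omega
  have h11 : d 1 = d' 1 := by omega
  have h22 : d 2 = d' 2 := by
    rw [h00] at h0
    omega
  ext i; fin_cases i <;> assumption

omit hk in
lemma Rser_normal (f : MvPowerSeries (Fin 3) ℂ) {d : Fin 3 →₀ ℕ}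
    (h : ¬ (d 0 = 0 ∨ d 1 = 0)) : Rser k f d = 0 := by
  simp only [Rser]
  rw [if_neg (fun hc => h (Or.inl hc)), if_neg (fun hc => h (Or.inr hc))]

include hk in
lemma phiFun_Rser_eq_zero {f g : MvPowerSeries (Fin 3) ℂ} (hg : g = Rser k f)
    (h : phiFun k g = 0) : g = 0 := by
  apply MvPowerSeries.ext; intro d
  rw [MvPowerSeries.coeff_apply, map_zero]
  by_cases hn : d 0 = 0 ∨ d 1 = 0
  · have h0 : coeff (E k d) (phiFun k g) = 0 := by rw [h, map_zero]
    rw [coeff_phiFun] at h0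
    rw [← h0]
    symm
    apply Finset.sum_eq_single_of_mem d ((mem_fiber hk).mpr rfl)
    intro d' hd' hne
    by_cases hn' : d' 0 = 0 ∨ d' 1 = 0
    · exact absurd (normal_unique hk hn' hn ((mem_fiber hk).mp hd')) hne
    · rw [MvPowerSeries.coeff_apply, hg, Rser_normal f hn']
  · rw [hg, Rser_normal f hn]

include hk in
lemma ker_phi : RingHom.ker (phi k hk) = Ideal.span {(X 0 * X 1 - X 2 ^ k :
    MvPowerSeries (Fin 3) ℂ)} := by
  apply le_antisymm
  · intro f hf
    rw [RingHom.mem_ker] at hf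
    have hdiv := division hk f
    have hphiR : phiFun k (Rser k f) = 0 := by
      have : phi k hk (Rser k f) = 0 := by
        have := congrArg (phi k hk) hdiv
        rw [map_add, map_mul, phi_t, zero_mul, zero_add, hf] at this
        exact this.symm
      exact this
    have hR0 : Rser k f = 0 := phiFun_Rser_eq_zero hk rfl hphiR
    rw [Ideal.mem_span_singleton]
    exact ⟨Dser k f, by conv_lhs => rw [hdiv, hR0, add_zero]⟩
  · rw [Ideal.span_le]
    intro x hx
    rw [Set.mem_singleton_iff] at hx
    rw [hx]
    exact RingHom.mem_ker.mpr (phi_t hk)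

variable (k) in
def invSet : Set (MvPowerSeries (Fin 2) ℂ) :=
  {f | ∀ ζ : ℂˣ, ζ ^ k = 1 → ∀ d : Fin 2 →₀ ℕ,
    (ζ : ℂ) ^ (d 0 : ℤ) * (ζ : ℂ) ^ (-(d 1 : ℤ)) * coeff d f = coeff d f}

include hk in
lemma range_subset_inv (g : MvPowerSeries (Fin 3) ℂ) : phi k hk g ∈ invSet k := by
  intro ζ hζ d
  by_cases hc : coeff d (phi k hk g) = 0
  · rw [hc]; ring
  · have hne : (ζ : ℂ) ≠ 0 := Units.ne_zero ζ
    obtain ⟨d', hd', -⟩ := Finset.exists_ne_zero_of_sum_ne_zero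
      (show ∑ d' ∈ fiber k d, coeff d' g ≠ 0 from hc)
    have hE := (mem_fiber hk).mp hd'
    have h0 : k * d' 0 + d' 2 = d 0 := by rw [← hE]; rfl
    have h1 : k * d' 1 + d' 2 = d 1 := by rw [← hE]; rfl
    have hdvd : (d 0 : ℤ) - (d 1 : ℤ) = (k : ℤ) * ((d' 0 : ℤ) - (d' 1 : ℤ)) := by
      rw [← h0, ← h1]; push_cast; ring
    have hζk : (ζ : ℂ) ^ (k : ℤ) = 1 := by
      rw [zpow_natCast, ← Units.val_pow_eq_pow_val, hζ, Units.val_one]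
    have hone : (ζ : ℂ) ^ (d 0 : ℤ) * (ζ : ℂ) ^ (-(d 1 : ℤ)) = 1 := by
      rw [← zpow_add₀ hne, ← sub_eq_add_neg, hdvd, zpow_mul, hζk, one_zpow]
    rw [hone, one_mul]

include hk in
lemma inv_coeff_zero {f : MvPowerSeries (Fin 2) ℂ} (hf : f ∈ invSet k) {e : Fin 2 →₀ ℕ}
    (hndvd : ¬ ((k : ℤ) ∣ ((e 0 : ℤ) - (e 1 : ℤ)))) : coeff e f = 0 := by
  by_contra hc
  set z := Complex.exp (2 * Real.pi * Complex.I / k) with hz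
  have hprim : IsPrimitiveRoot z k := Complex.isPrimitiveRoot_exp k (by omega)
  have hzne : z ≠ 0 := Complex.exp_ne_zero _
  set ζ : ℂˣ := Units.mk0 z hzne with hζdef
  have hζk : ζ ^ k = 1 := by
    ext
    rw [Units.val_pow_eq_pow_val, Units.val_one]
    exact hprim.pow_eq_one
  have := hf ζ hζk e
  have hval : (ζ : ℂ) = z := rfl
  rw [hval] at this
  have hone : z ^ ((e 0 : ℤ) - (e 1 : ℤ)) = 1 := by
    have h2 : z ^ (e 0 : ℤ) * z ^ (-(e 1 : ℤ)) = 1 :=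
      mul_right_cancel₀ hc (this.trans (one_mul _).symm)
    rw [← zpow_add₀ hzne, ← sub_eq_add_neg] at h2
    exact h2
  exact hndvd ((hprim.zpow_eq_one_iff_dvd _).mp hone)

include hk in
lemma inv_subset_range {f : MvPowerSeries (Fin 2) ℂ} (hf : f ∈ invSet k) :
    ∃ g, phi k hk g = f := by
  refine ⟨fun d => if d 0 = 0 ∨ d 1 = 0 then coeff (E k d) f else 0, ?_⟩
  apply MvPowerSeries.ext; intro e
  rw [show (coeff e) (phi k hk _) = ∑ d ∈ fiber k e,
    (if d 0 = 0 ∨ d 1 = 0 then coeff (E k d) f else 0) from rfl]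
  by_cases hdvd : (k : ℤ) ∣ ((e 0 : ℤ) - (e 1 : ℤ))
  · -- construct the normal preimage
    have hdhat : ∃ dhat : Fin 3 →₀ ℕ, (dhat 0 = 0 ∨ dhat 1 = 0) ∧ E k dhat = e := by
      by_cases hcmp : e 1 ≤ e 0
      · have hnd : k ∣ e 0 - e 1 := by
          have : ((e 0 - e 1 : ℕ) : ℤ) = (e 0 : ℤ) - e 1 := by push_cast; omega
          exact_mod_cast (Int.natCast_dvd_natCast).mp (by rw [this]; exact hdvd)
        refine ⟨mk3 ((e 0 - e 1) / k) 0 (e 1), Or.inr rfl, ?_⟩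
        have hq : k * ((e 0 - e 1) / k) = e 0 - e 1 := Nat.mul_div_cancel' hnd
        ext i; fin_cases i <;> simp [E] <;> omega
      · have hnd : k ∣ e 1 - e 0 := by
          have : ((e 1 - e 0 : ℕ) : ℤ) = (e 1 : ℤ) - e 0 := by push_cast; omega
          refine (Int.natCast_dvd_natCast).mp ?_
          rw [this, show (e 1 : ℤ) - e 0 = -((e 0 : ℤ) - e 1) by ring]
          exact dvd_neg.mpr hdvd
        refine ⟨mk3 0 ((e 1 - e 0) / k) (e 0), Or.inl rfl, ?_⟩
        have hq : k * ((e 1 - e 0) / k) = e 1 - e 0 := Nat.mul_div_cancel' hnd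
        ext i; fin_cases i <;> simp [E] <;> omega
    obtain ⟨dhat, hnorm, hE⟩ := hdhat
    rw [Finset.sum_eq_single_of_mem dhat ((mem_fiber hk).mpr hE)]
    · rw [if_pos hnorm, hE]
    · intro d' hd' hne
      by_cases hn' : d' 0 = 0 ∨ d' 1 = 0
      · exact absurd (normal_unique hk hn' hnorm (((mem_fiber hk).mp hd').trans hE.symm)) hne
      · rw [if_neg hn']
  · rw [inv_coeff_zero hk hf hdvd]
    apply Finset.sum_eq_zero
    intro d' hd'
    exfalso
    have hE := (mem_fiber hk).mp hd'
    have h0 : k * d' 0 + d' 2 = e 0 := by rw [← hE]; rfl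
    have h1 : k * d' 1 + d' 2 = e 1 := by rw [← hE]; rfl
    exact hdvd ⟨(d' 0 : ℤ) - d' 1, by rw [← h0, ← h1]; push_cast; ring⟩

end
end Stmt0Aux


open MvPowerSeries in
/-- the subring of μ_k-invariants of ℂ[[u,v]] (where `ζ·(u,v) = (ζu, ζ⁻¹v)`, so a
monomial `u^{d₀}v^{d₁}` is scaled by `ζ^{d₀}ζ^{-d₁}`) is isomorphic to
`ℂ[[x,y,s]]/(xy − s^k)` via `x ↦ u^k`, `y ↦ v^k`, `s ↦ uv`. -/
theorem stmt_0 (k : ℕ) (hk : 1 ≤ k) :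
    ∃ A : Subring (MvPowerSeries (Fin 2) ℂ),
      (A : Set (MvPowerSeries (Fin 2) ℂ)) =
        {f | ∀ ζ : ℂˣ, ζ ^ k = 1 → ∀ d : Fin 2 →₀ ℕ,
          (ζ : ℂ) ^ (d 0 : ℤ) * (ζ : ℂ) ^ (-(d 1 : ℤ)) * coeff d f = coeff d f} ∧
      ∃ e : (MvPowerSeries (Fin 3) ℂ ⧸
              Ideal.span {(X 0 * X 1 - X 2 ^ k : MvPowerSeries (Fin 3) ℂ)}) ≃+* A,
        (e (Ideal.Quotient.mk _ (X 0)) : MvPowerSeries (Fin 2) ℂ) = X 0 ^ k ∧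
        (e (Ideal.Quotient.mk _ (X 1)) : MvPowerSeries (Fin 2) ℂ) = X 1 ^ k ∧
        (e (Ideal.Quotient.mk _ (X 2)) : MvPowerSeries (Fin 2) ℂ) = X 0 * X 1 := by
  refine ⟨(Stmt0Aux.phi k hk).range, ?_, ?_⟩
  · ext f
    simp only [SetLike.mem_coe, RingHom.mem_range, Set.mem_setOf_eq]
    constructor
    · rintro ⟨g, rfl⟩
      exact Stmt0Aux.range_subset_inv hk g
    · exact fun hf => Stmt0Aux.inv_subset_range hk hf
  · refine ⟨(Ideal.quotEquivOfEq (Stmt0Aux.ker_phi hk).symm).trans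
      (RingHom.quotientKerEquivRange (Stmt0Aux.phi k hk)), ?_, ?_, ?_⟩ <;>
    · rw [RingEquiv.trans_apply, Ideal.quotEquivOfEq_mk]
      have hval : ∀ x : MvPowerSeries (Fin 3) ℂ,
          ((RingHom.quotientKerEquivRange (Stmt0Aux.phi k hk))
            (Ideal.Quotient.mk _ x) : MvPowerSeries (Fin 2) ℂ) = Stmt0Aux.phi k hk x := by
        intro x
        simp [RingHom.quotientKerEquivRange, RingHom.quotientKerEquivOfSurjective]
      rw [hval]
      first
        | exact Stmt0Aux.phi_X0 hk
        | exact Stmt0Aux.phi_X1 hk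
        | exact Stmt0Aux.phi_X2 hk
end

section
/- Let μ_k act on the loop group G((w)) by (ζ·γ)(w) = η(ζ)⁻¹ γ(ζw) η(ζ), where η: μ_k → T is the restriction of a cocharacter. Then for any γ ∈ G((z)), the element γ_η(w) := η(w) γ(w^k) η(w)⁻¹ is μ_k-invariant, and γ ↦ γ_η defines a group isomorphism from G((z)) onto the invariant subgroup (G((w)))^{μ_k}. -/
open Matrix HahnSeries

/-- Auxiliary: the "contraction" of a Laurent series, extracting the coefficients in the
arithmetic progression `k*q + c`. -/
noncomputable def stmt8Contract (k : ℕ) (hk : 0 < k) (c : ℤ) (f : LaurentSeries ℂ) :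
    LaurentSeries ℂ where
  coeff q := f.coeff ((k : ℤ) * q + c)
  isPWO_support' := by
    have hk' : (0 : ℤ) < (k : ℤ) := by exact_mod_cast hk
    have hmono : Monotone (fun m : ℤ => (m - c) / (k : ℤ)) := fun x y h =>
      Int.ediv_le_ediv hk' (sub_le_sub_right h c)
    refine (f.isPWO_support.image_of_monotone hmono).mono ?_
    intro q hq
    exact ⟨(k : ℤ) * q + c, hq, by
      simp only [add_sub_cancel_right]
      exact Int.mul_ediv_cancel_left q hk'.ne'⟩

open Matrix in
/-- μ_k acts on the loop group `G((w))` by `(ζ·γ)(w) = η(ζ)⁻¹ γ(ζw) η(ζ)`.  For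
`γ ∈ G((z))` the element `γ_η(w) = η(w) γ(w^k) η(w)⁻¹` is μ_k-invariant and `γ ↦ γ_η` is a
group isomorphism of `G((z))` onto `(G((w)))^{μ_k}`.  Model: `G = SL_n`, loops are matrices
over the Laurent series field `(LaurentSeries ℂ) = ℂ((w))`; `σ ζ : (LaurentSeries ℂ) →+* (LaurentSeries ℂ)` is `w ↦ ζw` (coefficientwise
`ζ^m`-scaling), `E : (LaurentSeries ℂ) →+* (LaurentSeries ℂ)` is `z ↦ w^k`, and the (integral multiple of the) cocharacter η
is the diagonal `a : Fin n → ℤ`, so `η(w) = diag(w^{a i})` and `η(ζ) = diag(ζ^{a i})`. -/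
theorem stmt_8 (n k : ℕ) (hn : 0 < n) (hk : 0 < k)
    (σ : ℂ → (LaurentSeries ℂ →+* LaurentSeries ℂ))
    (hσ : ∀ ζ : ℂ, ζ ≠ 0 → ∀ (f : LaurentSeries ℂ) (m : ℤ),
      ((σ ζ) f).coeff m = ζ ^ m * f.coeff m)
    (E : LaurentSeries ℂ →+* LaurentSeries ℂ)
    (hE : ∀ (f : LaurentSeries ℂ) (m : ℤ),
      (E f).coeff m = if (k : ℤ) ∣ m then f.coeff (m / (k : ℤ)) else 0)
    (a : Fin n → ℤ) (hsum : ∑ i, a i = 0) :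
    ∃ Φ : Matrix.SpecialLinearGroup (Fin n) (LaurentSeries ℂ) →*
        Matrix.SpecialLinearGroup (Fin n) (LaurentSeries ℂ),
      (∀ γ, (↑(Φ γ) : Matrix (Fin n) (Fin n) (LaurentSeries ℂ)) =
        diagonal (fun i => (HahnSeries.single (a i) 1 : LaurentSeries ℂ)) *
          (E.mapMatrix (↑γ : Matrix (Fin n) (Fin n) (LaurentSeries ℂ))) *
          diagonal (fun i => (HahnSeries.single (-(a i)) 1 : LaurentSeries ℂ))) ∧
      Function.Injective Φ ∧
      Set.range Φ = {g : Matrix.SpecialLinearGroup (Fin n) (LaurentSeries ℂ) | ∀ ζ : ℂ, ζ ^ k = 1 →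
        diagonal (fun i => (HahnSeries.single 0 (ζ ^ (-(a i))) : LaurentSeries ℂ)) *
          ((σ ζ).mapMatrix (↑g : Matrix (Fin n) (Fin n) (LaurentSeries ℂ))) *
          diagonal (fun i => (HahnSeries.single 0 (ζ ^ (a i)) : LaurentSeries ℂ)) =
          (↑g : Matrix (Fin n) (Fin n) (LaurentSeries ℂ))} := by
  classical
  have hk0 : ((k : ℤ)) ≠ 0 := by exact_mod_cast hk.ne'
  set D : Matrix (Fin n) (Fin n) (LaurentSeries ℂ) :=
    diagonal (fun i => (HahnSeries.single (a i) 1 : (LaurentSeries ℂ))) with hD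
  set Dinv : Matrix (Fin n) (Fin n) (LaurentSeries ℂ) :=
    diagonal (fun i => (HahnSeries.single (-(a i)) 1 : (LaurentSeries ℂ))) with hDinv
  have hDinvD : Dinv * D = 1 := by
    rw [hDinv, hD, diagonal_mul_diagonal]
    have : ∀ i : Fin n, (HahnSeries.single (-(a i)) 1 : (LaurentSeries ℂ)) * HahnSeries.single (a i) 1 = 1 := by
      intro i
      rw [single_mul_single, neg_add_cancel, one_mul, single_zero_one]
    simp only [this]
    exact Matrix.diagonal_one
  have hDDinv : D * Dinv = 1 := by
    rw [hDinv, hD, diagonal_mul_diagonal]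
    have : ∀ i : Fin n, (HahnSeries.single (a i) 1 : (LaurentSeries ℂ)) * HahnSeries.single (-(a i)) 1 = 1 := by
      intro i
      rw [single_mul_single, add_neg_cancel, one_mul, single_zero_one]
    simp only [this]
    exact Matrix.diagonal_one
  have hdetD : D.det * Dinv.det = 1 := by
    rw [hD, hDinv, det_diagonal, det_diagonal, ← Finset.prod_mul_distrib]
    have : ∀ i : Fin n, (HahnSeries.single (a i) 1 : (LaurentSeries ℂ)) * HahnSeries.single (-(a i)) 1 = 1 := by
      intro i
      rw [single_mul_single, add_neg_cancel, one_mul, single_zero_one]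
    simp only [this]
    exact Finset.prod_const_one
  have hEinj : Function.Injective E := E.injective
  -- determinant of the conjugated matrix
  have detΦ : ∀ M : Matrix (Fin n) (Fin n) (LaurentSeries ℂ), (D * E.mapMatrix M * Dinv).det = E M.det := by
    intro M
    rw [det_mul, det_mul, ← RingHom.map_det]
    calc D.det * E M.det * Dinv.det = E M.det * (D.det * Dinv.det) := by ring
      _ = E M.det := by rw [hdetD, mul_one]
  -- the map on special linear groups
  let Φfun : Matrix.SpecialLinearGroup (Fin n) (LaurentSeries ℂ) → Matrix.SpecialLinearGroup (Fin n) (LaurentSeries ℂ) :=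
    fun γ => ⟨D * E.mapMatrix (↑γ : Matrix (Fin n) (Fin n) (LaurentSeries ℂ)) * Dinv, by
      rw [detΦ, Matrix.SpecialLinearGroup.det_coe, _root_.map_one]⟩
  have hΦmul : ∀ γ δ, Φfun (γ * δ) = Φfun γ * Φfun δ := by
    intro γ δ
    apply Subtype.ext
    show D * E.mapMatrix ((↑γ : Matrix (Fin n) (Fin n) (LaurentSeries ℂ)) * (↑δ : Matrix (Fin n) (Fin n) (LaurentSeries ℂ))) * Dinv
        = (D * E.mapMatrix (↑γ : Matrix (Fin n) (Fin n) (LaurentSeries ℂ)) * Dinv) *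
          (D * E.mapMatrix (↑δ : Matrix (Fin n) (Fin n) (LaurentSeries ℂ)) * Dinv)
    rw [_root_.map_mul]
    have h1 : D * E.mapMatrix (↑γ : Matrix (Fin n) (Fin n) (LaurentSeries ℂ)) * (Dinv * D) *
        E.mapMatrix (↑δ : Matrix (Fin n) (Fin n) (LaurentSeries ℂ)) * Dinv
        = D * (E.mapMatrix (↑γ : Matrix (Fin n) (Fin n) (LaurentSeries ℂ)) *
            E.mapMatrix (↑δ : Matrix (Fin n) (Fin n) (LaurentSeries ℂ))) * Dinv := by
      rw [hDinvD, mul_one]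
      simp only [mul_assoc]
    rw [← h1]
    simp only [mul_assoc]
  let Φ : Matrix.SpecialLinearGroup (Fin n) (LaurentSeries ℂ) →* Matrix.SpecialLinearGroup (Fin n) (LaurentSeries ℂ) :=
    MonoidHom.mk' Φfun hΦmul
  have hΦcoe : ∀ γ, (↑(Φ γ) : Matrix (Fin n) (Fin n) (LaurentSeries ℂ))
      = D * E.mapMatrix (↑γ : Matrix (Fin n) (Fin n) (LaurentSeries ℂ)) * Dinv := fun _ => rfl
  -- entrywise coefficient formula for the conjugation
  have hΦcoeff : ∀ (M : Matrix (Fin n) (Fin n) (LaurentSeries ℂ)) (i j : Fin n) (m : ℤ),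
      ((D * E.mapMatrix M * Dinv) i j).coeff m =
        if (k : ℤ) ∣ (m - a i + a j) then (M i j).coeff ((m - a i + a j) / (k : ℤ)) else 0 := by
    intro M i j m
    rw [hD, hDinv, Matrix.mul_diagonal, Matrix.diagonal_mul]
    rw [RingHom.mapMatrix_apply, Matrix.map_apply]
    have h1 : ((HahnSeries.single (a i) 1 * E (M i j) : (LaurentSeries ℂ)) *
        HahnSeries.single (-(a j)) 1).coeff m
        = (HahnSeries.single (a i) 1 * E (M i j) : (LaurentSeries ℂ)).coeff (m + a j) := by
      have := coeff_mul_single_add (x := (HahnSeries.single (a i) 1 * E (M i j) : (LaurentSeries ℂ)))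
        (r := (1 : ℂ)) (a := m + a j) (b := -(a j))
      simpa using this
    have h2 : (HahnSeries.single (a i) 1 * E (M i j) : (LaurentSeries ℂ)).coeff (m + a j)
        = (E (M i j)).coeff (m - a i + a j) := by
      have := coeff_single_mul_add (x := E (M i j)) (r := (1 : ℂ))
        (a := m - a i + a j) (b := a i)
      rw [one_mul] at this
      rw [← this]
      congr 1
      ring
    rw [h1, h2, hE]
  -- injectivity
  have cancel : ∀ X : Matrix (Fin n) (Fin n) (LaurentSeries ℂ), Dinv * (D * X * Dinv) * D = X := by
    intro X
    calc Dinv * (D * X * Dinv) * D = (Dinv * D) * X * (Dinv * (D))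
          := by simp only [mul_assoc]
      _ = X := by rw [hDinvD, one_mul, mul_one]
  have hinj : Function.Injective Φ := by
    intro γ δ h
    apply Subtype.ext
    have h' : D * E.mapMatrix (↑γ : Matrix (Fin n) (Fin n) (LaurentSeries ℂ)) * Dinv
        = D * E.mapMatrix (↑δ : Matrix (Fin n) (Fin n) (LaurentSeries ℂ)) * Dinv := by
      have := congrArg (fun x : Matrix.SpecialLinearGroup (Fin n) (LaurentSeries ℂ) =>
        (↑x : Matrix (Fin n) (Fin n) (LaurentSeries ℂ))) h
      simpa [hΦcoe] using this
    have h2 : E.mapMatrix (↑γ : Matrix (Fin n) (Fin n) (LaurentSeries ℂ))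
        = E.mapMatrix (↑δ : Matrix (Fin n) (Fin n) (LaurentSeries ℂ)) := by
      have := congrArg (fun X => Dinv * X * D) h'
      simpa only [cancel] using this
    refine Matrix.ext fun i j => hEinj ?_
    have := congrFun (congrFun (congrArg (fun X : Matrix (Fin n) (Fin n) (LaurentSeries ℂ) => X) h2) i) j
    simpa [RingHom.mapMatrix_apply, Matrix.map_apply] using this
  -- the invariance property for images
  refine ⟨Φ, hΦcoe, hinj, ?_⟩
  ext g
  constructor
  · rintro ⟨γ, rfl⟩
    intro ζ hζk
    have hζ : ζ ≠ 0 := by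
      intro h
      rw [h, zero_pow hk.ne'] at hζk
      exact zero_ne_one hζk
    have hζd : ∀ d : ℤ, (k : ℤ) ∣ d → ζ ^ d = 1 := by
      rintro d ⟨t, rfl⟩
      rw [_root_.zpow_mul, zpow_natCast, hζk, _root_.one_zpow]
    rw [hΦcoe]
    refine Matrix.ext fun i j => HahnSeries.ext ?_
    funext m
    rw [Matrix.mul_diagonal, Matrix.diagonal_mul, RingHom.mapMatrix_apply, Matrix.map_apply]
    rw [coeff_mul_single_zero, coeff_single_zero_mul, hσ ζ hζ]
    rw [hΦcoeff]
    by_cases hd : (k : ℤ) ∣ (m - a i + a j)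
    · rw [if_pos hd]
      have hz : ζ ^ (-(a i)) * (ζ ^ m *
          ((↑γ : Matrix (Fin n) (Fin n) (LaurentSeries ℂ)) i j).coeff ((m - a i + a j) / (k : ℤ))) * ζ ^ (a j)
          = ζ ^ (m - a i + a j) *
            ((↑γ : Matrix (Fin n) (Fin n) (LaurentSeries ℂ)) i j).coeff ((m - a i + a j) / (k : ℤ)) := by
        rw [show m - a i + a j = -(a i) + m + a j by ring, zpow_add₀ hζ, zpow_add₀ hζ]
        ring
      rw [hz, hζd _ hd, one_mul]
    · rw [if_neg hd]
      ring
  · intro hg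
    -- use a primitive k-th root of unity to get the support condition
    set ζ0 : ℂ := Complex.exp (2 * Real.pi * Complex.I / k) with hζ0
    have hprim : IsPrimitiveRoot ζ0 k := Complex.isPrimitiveRoot_exp k hk.ne'
    have hζ0k : ζ0 ^ k = 1 := hprim.pow_eq_one
    have hζ0ne : ζ0 ≠ 0 := hprim.ne_zero hk.ne'
    have hsupp : ∀ (i j : Fin n) (m : ℤ), ¬ (k : ℤ) ∣ (m - a i + a j) →
        ((↑g : Matrix (Fin n) (Fin n) (LaurentSeries ℂ)) i j).coeff m = 0 := by
      intro i j m hd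
      have := hg ζ0 hζ0k
      have hentry := congrFun (congrFun (congrArg (fun X : Matrix (Fin n) (Fin n) (LaurentSeries ℂ) => X) this) i) j
      have hco := congrArg (fun f : (LaurentSeries ℂ) => f.coeff m) hentry
      simp only [Matrix.mul_diagonal, Matrix.diagonal_mul, RingHom.mapMatrix_apply,
        Matrix.map_apply, coeff_mul_single_zero, coeff_single_zero_mul, hσ ζ0 hζ0ne] at hco
      set c := ((↑g : Matrix (Fin n) (Fin n) (LaurentSeries ℂ)) i j).coeff m with hc
      have hz : ζ0 ^ (-(a i)) * (ζ0 ^ m * c) * ζ0 ^ (a j) = ζ0 ^ (m - a i + a j) * c := by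
        rw [show m - a i + a j = -(a i) + m + a j by ring, zpow_add₀ hζ0ne, zpow_add₀ hζ0ne]
        ring
      rw [hz] at hco
      have hne : ζ0 ^ (m - a i + a j) ≠ 1 :=
        fun h1 => hd ((hprim.zpow_eq_one_iff_dvd _).mp h1)
      have hz0 : (ζ0 ^ (m - a i + a j) - 1) * c = 0 := by
        rw [sub_mul, one_mul, hco, sub_self]
      rcases mul_eq_zero.mp hz0 with h | h
      · exact absurd (sub_eq_zero.mp h) hne
      · exact h
    -- construct the preimage matrix
    set N : Matrix (Fin n) (Fin n) (LaurentSeries ℂ) :=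
      Matrix.of (fun i j => stmt8Contract k hk (a i - a j)
        ((↑g : Matrix (Fin n) (Fin n) (LaurentSeries ℂ)) i j)) with hN
    have hΦN : D * E.mapMatrix N * Dinv = (↑g : Matrix (Fin n) (Fin n) (LaurentSeries ℂ)) := by
      refine Matrix.ext fun i j => HahnSeries.ext ?_
      funext m
      rw [hΦcoeff]
      by_cases hd : (k : ℤ) ∣ (m - a i + a j)
      · rw [if_pos hd]
        show ((↑g : Matrix (Fin n) (Fin n) (LaurentSeries ℂ)) i j).coeff
            ((k : ℤ) * ((m - a i + a j) / (k : ℤ)) + (a i - a j))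
            = ((↑g : Matrix (Fin n) (Fin n) (LaurentSeries ℂ)) i j).coeff m
        rw [Int.mul_ediv_cancel' hd]
        congr 1
        ring
      · rw [if_neg hd]
        exact (hsupp i j m hd).symm
    have hdetN : N.det = 1 := by
      apply hEinj
      rw [_root_.map_one, ← detΦ, hΦN]
      exact g.2
    exact ⟨⟨N, hdetN⟩, Subtype.ext hΦN⟩
end
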